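/- For every integer N ≥ 1, the following identity holds in the polynomial ring ℚ[α, x₁, …, x_n]: ∑_{i=0}^N g_{(i)} · ĝ_{N−i} = 0, where g_{(0)} = ĝ_0 = 1, g_{(i)} := ∑_{j=1}^i α^{i−j} C(i−1, j−1) h_j(x₁,…,x_n) for i ≥ 1, and ĝ_m := ∑_{j=1}^m α^{m−j} C(m−1, j−1) (−1)^j e_j(x₁,…,x_n) for m ≥ 1. (Equivalently, ∑_i g^{(α,β)}_{(i)}(x) · g^{(β,α)}_{(1^{N−i})}(−x) = δ_{N,0}.) -/

import Mathlib

/-- The complete homogeneous symmetric polynomial `h_m(y₁,…,yₙ)`. -/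
noncomputable def hps {R : Type*} [CommRing R] (n m : ℕ) (y : Fin n → R) : R :=
  ∑ c ∈ Finset.Nat.antidiagonalTuple n m, ∏ i, y i ^ c i

/-- The elementary symmetric polynomial `e_m(y₁,…,yₙ)` (zero for `m > n`). -/
noncomputable def eps {R : Type*} [CommRing R] (n m : ℕ) (y : Fin n → R) : R :=
  ∑ S ∈ Finset.powersetCard m (Finset.univ : Finset (Fin n)), ∏ i ∈ S, y i

/-- `g_{(i)} = g^{(α,β)}_{(i)}(x)`, with `g_{(0)} = 1`. -/
noncomputable def grow {R : Type*} [CommRing R] (n : ℕ) (α : R) (x : Fin n → R) (i : ℕ) : R :=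
  if i = 0 then 1 else
    ∑ j ∈ Finset.Icc 1 i, α ^ (i - j) * ((i - 1).choose (j - 1) : R) * hps n j x

/-- `ĝ_m = g^{(β,α)}_{(1^m)}(-x)`, with `ĝ_0 = 1`. -/
noncomputable def ghat {R : Type*} [CommRing R] (n : ℕ) (α : R) (x : Fin n → R) (m : ℕ) : R :=
  if m = 0 then 1 else
    ∑ j ∈ Finset.Icc 1 m, α ^ (m - j) * ((m - 1).choose (j - 1) : R) * (-1 : R) ^ j * eps n j x


open PowerSeries Finset

private lemma hockey (j : ℕ) : ∀ t, ∑ a ∈ range (t+1), (a + j).choose j = (t + j + 1).choose (j+1)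
  | 0 => by simp
  | (t+1) => by
    rw [Finset.sum_range_succ, hockey j t,
      show t + 1 + j + 1 = (t + j + 1) + 1 by omega,
      Nat.choose_succ_succ (t + j + 1) j,
      show t + 1 + j = t + j + 1 by omega]
    simp only [Nat.succ_eq_add_one]
    omega

private lemma geom {R : Type*} [CommRing R] (a : R) :
    (1 - PowerSeries.C (R := R) a * X) * PowerSeries.mk (fun t => a ^ t) = 1 := by
  ext d
  cases d with
  | zero => simp
  | succ d =>
    simp only [sub_mul, one_mul, map_sub, mul_assoc, coeff_C_mul, coeff_succ_X_mul, coeff_mk]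
    simp [pow_succ, mul_comm]

private lemma Upow {R : Type*} [CommRing R] (α : R) (j : ℕ) : ∀ t,
    PowerSeries.coeff (R := R) t ((PowerSeries.mk fun s => α ^ s) ^ (j+1)) = ((t + j).choose j : R) * α ^ t := by
  induction j with
  | zero => intro t; simp
  | succ j ih =>
    intro t
    rw [pow_succ, PowerSeries.coeff_mul, Finset.Nat.sum_antidiagonal_eq_sum_range_succ_mk]
    have : ∀ a ∈ range (t+1),
        PowerSeries.coeff (R := R) a ((PowerSeries.mk fun s => α ^ s) ^ (j+1)) *
          PowerSeries.coeff (R := R) (t - a) (PowerSeries.mk fun s => α ^ s)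
        = ((a + j).choose j : R) * α ^ t := by
      intro a ha
      rw [ih a, coeff_mk, mul_assoc, ← pow_add]
      congr 2
      rw [mem_range] at ha; omega
    rw [Finset.sum_congr rfl this, ← Finset.sum_mul, ← Nat.cast_sum, hockey j t]
    norm_num [Nat.add_assoc]

private lemma coeffXU {R : Type*} [CommRing R] (α : R) (j d : ℕ) :
    PowerSeries.coeff (R := R) d ((X * PowerSeries.mk fun s => α ^ s) ^ j) =
      if j = 0 then (if d = 0 then 1 else 0)
      else if j ≤ d then ((d-1).choose (j-1) : R) * α ^ (d - j) else 0 := by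
  cases j with
  | zero => simp [PowerSeries.coeff_one]
  | succ j =>
    rw [mul_pow, mul_comm ((X : PowerSeries R)^(j+1)), PowerSeries.coeff_mul_X_pow']
    simp only [Nat.succ_ne_zero, if_false]
    by_cases h : j + 1 ≤ d
    · rw [if_pos h, if_pos h, Upow, show d - (j+1) + j = d - 1 by omega,
        show j + 1 - 1 = j from rfl]
    · rw [if_neg h, if_neg h]

private lemma coeffG {R : Type*} [CommRing R] (α : R) (N : ℕ) (c : ℕ → R) (hc0 : c 0 = 1)
    (d : ℕ) (hd : d ≤ N) :
    PowerSeries.coeff (R := R) d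
        (∑ j ∈ range (N+1), PowerSeries.C (R := R) (c j) * (X * PowerSeries.mk fun s => α ^ s) ^ j) =
      if d = 0 then 1 else ∑ j ∈ Finset.Icc 1 d, α ^ (d - j) * ((d-1).choose (j-1) : R) * c j := by
  rw [map_sum]
  simp only [coeff_C_mul, coeffXU]
  by_cases hd0 : d = 0
  · subst hd0
    rw [Finset.sum_eq_single 0]
    · simp [hc0]
    · intro b _ hb
      simp [hb, Nat.pos_of_ne_zero hb]
    · simp
  · simp only [if_neg hd0]
    have hsub : Finset.Icc 1 d ⊆ range (N+1) := fun j hj => by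
      rw [Finset.mem_Icc] at hj; rw [Finset.mem_range]; omega
    refine Eq.trans (Finset.sum_subset hsub ?_).symm (Finset.sum_congr rfl ?_)
    · intro j hj hj2
      rw [Finset.mem_range] at hj
      rw [Finset.mem_Icc] at hj2
      by_cases hj0 : j = 0
      · simp [hj0, hd0]
      · rw [if_neg hj0, if_neg (by omega)]
        simp
    · intro j hj
      rw [Finset.mem_Icc] at hj
      rw [if_neg (by omega), if_pos hj.2]
      ring

private lemma coeffE {R : Type*} [CommRing R] {ι : Type*} [DecidableEq ι]
    (r : ι → R) (s : Finset ι) : ∀ (k : ℕ),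
    PowerSeries.coeff (R := R) k (∏ i ∈ s, (1 - PowerSeries.C (R := R) (r i) * X)) =
      ∑ S ∈ Finset.powersetCard k s, ∏ i ∈ S, (-r i) := by
  induction s using Finset.induction with
  | empty =>
    intro k
    cases k with
    | zero => simp
    | succ k =>
      rw [Finset.prod_empty, PowerSeries.coeff_one, if_neg (Nat.succ_ne_zero k)]
      rw [show Finset.powersetCard (k+1) (∅ : Finset ι) = ∅ by
        ext S; simp [Finset.mem_powersetCard, Finset.subset_empty]
        rintro rfl; simp]
      simp
  | insert a s ha ih =>
    intro k
    rw [Finset.prod_insert ha]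
    have expand : (1 - PowerSeries.C (R := R) (r a) * X) * (∏ i ∈ s, (1 - PowerSeries.C (R := R) (r i) * X))
        = (∏ i ∈ s, (1 - PowerSeries.C (R := R) (r i) * X))
          - PowerSeries.C (R := R) (r a) * (X * ∏ i ∈ s, (1 - PowerSeries.C (R := R) (r i) * X)) := by
      ring
    rw [expand, map_sub, coeff_C_mul]
    cases k with
    | zero =>
      have h0 := ih 0
      rw [PowerSeries.coeff_zero_eq_constantCoeff] at h0
      simp only [PowerSeries.coeff_zero_eq_constantCoeff, map_mul, constantCoeff_X, zero_mul,
        mul_zero, sub_zero, map_sub]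
      rw [h0]
      simp [Finset.powersetCard_zero]
    | succ k =>
      rw [coeff_succ_X_mul, ih (k+1), ih k, Finset.powersetCard_succ_insert ha,
        Finset.sum_union, Finset.sum_image (fun S hS T hT hST => by
          have hS' := Finset.mem_powersetCard.mp hS
          have hT' := Finset.mem_powersetCard.mp hT
          have : S = Finset.erase (insert a S) a := by
            rw [Finset.erase_insert (fun haS => ha (hS'.1 haS))]
          rw [this, hST, Finset.erase_insert (fun haT => ha (hT'.1 haT))])]
      have : ∀ S ∈ Finset.powersetCard k s, ∏ i ∈ insert a S, (-r i) = (-r a) * ∏ i ∈ S, (-r i) := by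
        intro S hS
        have hS' := Finset.mem_powersetCard.mp hS
        exact Finset.prod_insert (fun haS => ha (hS'.1 haS))
      rw [Finset.sum_congr rfl this, ← Finset.mul_sum]
      ring
      · rw [Finset.disjoint_left]
        intro S hS hS'
        obtain ⟨T, hT, rfl⟩ := Finset.mem_image.mp hS'
        exact ha ((Finset.mem_powersetCard.mp hS).1 (Finset.mem_insert_self a T))

private lemma coeffH {R : Type*} [CommRing R] (n m : ℕ) (y : Fin n → R) :
    PowerSeries.coeff (R := R) m (∏ i : Fin n, PowerSeries.mk fun t => y i ^ t) = hps n m y := by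
  classical
  rw [PowerSeries.coeff_prod, hps]
  refine Finset.sum_nbij' (fun l => (l : Fin n → ℕ))
    (fun c => Finsupp.equivFunOnFinite.symm c) ?_ ?_ ?_ ?_ ?_
  · intro l hl
    rw [Finset.mem_finsuppAntidiag] at hl
    rw [Finset.Nat.mem_antidiagonalTuple]
    exact hl.1
  · intro c hc
    rw [Finset.Nat.mem_antidiagonalTuple] at hc
    rw [Finset.mem_finsuppAntidiag]
    constructor
    · simpa using hc
    · exact Finset.subset_univ _
  · intro l _; simp
  · intro c _
    rfl
  · intro l _
    apply Finset.prod_congr rfl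
    intro i _
    rw [coeff_mk]

private lemma coeffE' {R : Type*} [CommRing R] (n k : ℕ) (y : Fin n → R) :
    PowerSeries.coeff (R := R) k (∏ i : Fin n, (1 - PowerSeries.C (R := R) (y i) * X)) =
      (-1 : R) ^ k * eps n k y := by
  rw [coeffE, eps, Finset.mul_sum]
  apply Finset.sum_congr rfl
  intro S hS
  have hcard : S.card = k := (Finset.mem_powersetCard.mp hS).2
  rw [← hcard]
  rw [Finset.prod_congr rfl (fun i (_ : i ∈ S) => show -y i = -1 * y i by ring),
    Finset.prod_mul_distrib, Finset.prod_const]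

private lemma helem {R : Type*} [CommRing R] (n : ℕ) (y : Fin n → R) (m : ℕ) (hm : m ≠ 0) :
    ∑ p ∈ Finset.HasAntidiagonal.antidiagonal m, hps n p.1 y * ((-1 : R) ^ p.2 * eps n p.2 y) = 0 := by
  have hEH : (∏ i : Fin n, PowerSeries.mk fun t => y i ^ t) *
      (∏ i : Fin n, (1 - PowerSeries.C (R := R) (y i) * X)) = 1 := by
    rw [← Finset.prod_mul_distrib]
    rw [Finset.prod_congr rfl (fun i (_ : i ∈ Finset.univ) => by
      rw [mul_comm, geom (y i)])]
    exact Finset.prod_const_one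
  have h2 := congrArg (PowerSeries.coeff (R := R) m) hEH
  rw [PowerSeries.coeff_mul, PowerSeries.coeff_one, if_neg hm] at h2
  rw [← h2]
  apply Finset.sum_congr rfl
  intro p _
  rw [coeffH, coeffE']

/-- for every `N ≥ 1`, `∑_{i=0}^N g_{(i)}·ĝ_{N-i} = 0`
(equivalently `∑_i g^{(α,β)}_{(i)}(x)·g^{(β,α)}_{(1^{N-i})}(-x) = δ_{N,0}`).
Stated over an arbitrary commutative ring, which subsumes `ℚ[α, x₁, …, xₙ]`. -/
theorem stmt12 {R : Type*} [CommRing R] (n : ℕ) (α : R) (x : Fin n → R) (N : ℕ) (hN : 1 ≤ N) :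
    ∑ i ∈ Finset.range (N + 1), grow n α x i * ghat n α x (N - i) = 0 := by
  classical
  have hps0 : hps n 0 x = 1 := by
    rw [hps, Finset.Nat.antidiagonalTuple_zero_right]
    simp
  have eps0 : (-1 : R) ^ 0 * eps n 0 x = 1 := by
    rw [eps, Finset.powersetCard_zero]; simp
  have key : ∑ i ∈ Finset.range (N + 1), grow n α x i * ghat n α x (N - i)
      = PowerSeries.coeff (R := R) N (PowerSeries.mk (grow n α x) * PowerSeries.mk (ghat n α x)) := by
    rw [PowerSeries.coeff_mul, Finset.Nat.sum_antidiagonal_eq_sum_range_succ_mk]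
    simp [coeff_mk]
  rw [key]
  have hgrow : ∀ d ≤ N, PowerSeries.coeff (R := R) d (PowerSeries.mk (grow n α x)) =
      PowerSeries.coeff (R := R) d (∑ j ∈ range (N+1),
        PowerSeries.C (R := R) (hps n j x) * (X * PowerSeries.mk fun s => α ^ s) ^ j) := by
    intro d hd
    rw [coeff_mk, coeffG α N (fun j => hps n j x) hps0 d hd, grow]
  have hghat : ∀ d ≤ N, PowerSeries.coeff (R := R) d (PowerSeries.mk (ghat n α x)) =
      PowerSeries.coeff (R := R) d (∑ j ∈ range (N+1),
        PowerSeries.C (R := R) ((-1 : R) ^ j * eps n j x) * (X * PowerSeries.mk fun s => α ^ s) ^ j) := by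
    intro d hd
    rw [coeff_mk, coeffG α N (fun j => (-1 : R) ^ j * eps n j x) eps0 d hd, ghat]
    split
    · rfl
    · apply Finset.sum_congr rfl; intro j _; ring
  have step2 : PowerSeries.coeff (R := R) N (PowerSeries.mk (grow n α x) * PowerSeries.mk (ghat n α x)) =
      PowerSeries.coeff (R := R) N
        ((∑ j ∈ range (N+1),
          PowerSeries.C (R := R) (hps n j x) * (X * PowerSeries.mk fun s => α ^ s) ^ j) *
         (∑ j ∈ range (N+1),
          PowerSeries.C (R := R) ((-1 : R) ^ j * eps n j x) * (X * PowerSeries.mk fun s => α ^ s) ^ j)) := by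
    rw [PowerSeries.coeff_mul, PowerSeries.coeff_mul]
    apply Finset.sum_congr rfl
    intro p hp
    rw [Finset.HasAntidiagonal.mem_antidiagonal] at hp
    rw [hgrow p.1 (by omega), hghat p.2 (by omega)]
  rw [step2, Finset.sum_mul_sum, map_sum]
  have hterm : ∀ j ∈ range (N+1), PowerSeries.coeff (R := R) N
      (∑ k ∈ range (N+1),
        (PowerSeries.C (R := R) (hps n j x) * (X * PowerSeries.mk fun s => α ^ s) ^ j) *
        (PowerSeries.C (R := R) ((-1 : R) ^ k * eps n k x) * (X * PowerSeries.mk fun s => α ^ s) ^ k))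
      = ∑ k ∈ range (N+1), (hps n j x * ((-1 : R) ^ k * eps n k x)) *
          PowerSeries.coeff (R := R) N ((X * PowerSeries.mk fun s => α ^ s) ^ (j + k)) := by
    intro j _
    rw [map_sum]
    apply Finset.sum_congr rfl
    intro k _
    rw [show (PowerSeries.C (R := R) (hps n j x) * (X * PowerSeries.mk fun s => α ^ s) ^ j) *
        (PowerSeries.C (R := R) ((-1 : R) ^ k * eps n k x) * (X * PowerSeries.mk fun s => α ^ s) ^ k)
        = PowerSeries.C (R := R) (hps n j x * ((-1 : R) ^ k * eps n k x)) *
          (X * PowerSeries.mk fun s => α ^ s) ^ (j + k) by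
      simp only [map_mul, pow_add]; ring]
    rw [coeff_C_mul]
  rw [Finset.sum_congr rfl hterm, ← Finset.sum_product']
  have hmaps : ∀ p ∈ (range (N+1)) ×ˢ (range (N+1)), p.1 + p.2 ∈ range (2*N+1) := by
    intro p hp
    rw [Finset.mem_product, Finset.mem_range, Finset.mem_range] at hp
    rw [Finset.mem_range]
    omega
  rw [← Finset.sum_fiberwise_of_maps_to hmaps]
  apply Finset.sum_eq_zero
  intro m hm
  have hfix : ∀ p ∈ ((range (N+1)) ×ˢ (range (N+1))).filter (fun p => p.1 + p.2 = m),
      (hps n p.1 x * ((-1 : R) ^ p.2 * eps n p.2 x)) *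
        PowerSeries.coeff (R := R) N ((X * PowerSeries.mk fun s => α ^ s) ^ (p.1 + p.2))
      = (hps n p.1 x * ((-1 : R) ^ p.2 * eps n p.2 x)) *
        PowerSeries.coeff (R := R) N ((X * PowerSeries.mk fun s => α ^ s) ^ m) := by
    intro p hp
    rw [Finset.mem_filter] at hp
    rw [hp.2]
  rw [Finset.sum_congr rfl hfix, ← Finset.sum_mul]
  by_cases hm0 : m = 0
  · subst hm0
    rw [pow_zero, PowerSeries.coeff_one, if_neg (by omega : ¬ N = 0)]
    rw [mul_zero]
  · by_cases hmN : m ≤ N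
    · have hset : ((range (N+1)) ×ˢ (range (N+1))).filter (fun p => p.1 + p.2 = m)
          = Finset.HasAntidiagonal.antidiagonal m := by
        ext p
        rw [Finset.mem_filter, Finset.mem_product, Finset.mem_range, Finset.mem_range,
          Finset.HasAntidiagonal.mem_antidiagonal]
        omega
      rw [hset, helem n x m hm0, zero_mul]
    · rw [coeffXU α m N, if_neg hm0, if_neg hmN, mul_zero]
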